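/- Let t > 0 be real, let v and K be positive integers with K ≤ v, and set s* = 1/2 − it, a = t/(2πv), b = −t/(4πv²), and c(j) = (K/v)^j · f_{s*}^{(j)}(0)/j! for each nonnegative integer j, where f_{s*}^{(j)} denotes the j-th complex derivative of f_{s*}. Then the series Σ_{j=0}^∞ c(j)·F(K, j; a, b) converges absolutely and Σ_{k=0}^{K−1} e^{i t·log(v+k)}/√(v+k) = (e^{i t·log v}/√v) · Σ_{j=0}^∞ c(j)·F(K, j; a, b). -/

import Mathlib

open Real Complex

/-- `f_s(z) = e^{(s−1/2)(z − z²/2)}/(1+z)^s`, holomorphic on the unit disc,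
with `(1+z)^s` the principal branch. -/
noncomputable def fRS (s : ℂ) (z : ℂ) : ℂ :=
  Complex.exp ((s - 1/2) * (z - z^2/2)) / (1+z)^s

/-- The normalized quadratic exponential sum
`F(K, j; a, b) = K^{−j} Σ_{k=0}^{K−1} k^j e^{2πiak + 2πibk²}`
(with `k^j = 1` when `k = j = 0`). -/
noncomputable def quadSum (K : ℕ) (j : ℕ) (a b : ℝ) : ℂ :=
  (1/(K:ℂ)^j) * ∑ k ∈ Finset.range K,
    (k:ℂ)^j * Complex.exp (2*(π:ℂ)*Complex.I*((a*k : ℝ):ℂ) + 2*(π:ℂ)*Complex.I*((b*k^2 : ℝ):ℂ))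

lemma fRS_diff (s : ℂ) : DifferentiableOn ℂ (fRS s) (Metric.ball 0 1) := by
  intro z hz
  have hre : 0 < (1 + z).re := by
    simp only [Metric.mem_ball, dist_zero_right] at hz
    have h2 : |z.re| < 1 := (Complex.abs_re_le_norm z).trans_lt hz
    have := abs_lt.mp h2
    simp only [Complex.add_re, Complex.one_re]
    linarith [this.1]
  have hne : (1 : ℂ) + z ≠ 0 := fun h => by simp [h] at hre
  apply DifferentiableAt.differentiableWithinAt
  apply DifferentiableAt.div
  · exact Complex.differentiable_exp.differentiableAt.comp z (by fun_prop)
  · exact DifferentiableAt.cpow (by fun_prop) (differentiableAt_const s)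
      (Complex.mem_slitPlane_iff.2 (Or.inl hre))
  · rw [Ne, Complex.cpow_eq_zero_iff]
    tauto

lemma sqrt_ofReal_eq (x : ℝ) (hx : 0 < x) :
    ((Real.sqrt x : ℝ) : ℂ) = Complex.exp (((Real.log x)/2 : ℝ) : ℂ) := by
  rw [show Real.sqrt x = Real.exp (Real.log x * (1/2)) by
    rw [Real.sqrt_eq_rpow, Real.rpow_def_of_pos hx], Complex.ofReal_exp]
  congr 1; push_cast; ring

lemma point_id (t : ℝ) (v k : ℕ) (hv : 0 < v) (hk : k < v) :
    Complex.exp (Complex.I * (t:ℂ) * (Real.log ((v:ℝ) + (k:ℝ)) : ℂ))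
        / ((Real.sqrt ((v:ℝ) + (k:ℝ)) : ℝ) : ℂ)
    = (Complex.exp (Complex.I * (t:ℂ) * (Real.log (v:ℝ) : ℂ)) / ((Real.sqrt (v:ℝ) : ℝ) : ℂ))
      * (fRS (1/2 - t*Complex.I) ((k:ℂ)/(v:ℂ))
        * Complex.exp (2*(π:ℂ)*Complex.I*((t/(2*π*v)*k : ℝ):ℂ)
            + 2*(π:ℂ)*Complex.I*((-t/(4*π*v^2)*k^2 : ℝ):ℂ))) := by
  have hv0 : (0:ℝ) < (v:ℝ) := by exact_mod_cast hv
  have hvk : (0:ℝ) < (v:ℝ) + (k:ℝ) := by positivity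
  have hπ : (π:ℂ) ≠ 0 := by exact_mod_cast Real.pi_ne_zero
  have hvC : (v:ℂ) ≠ 0 := by exact_mod_cast hv.ne'
  have hcp : ((1:ℂ) + (k:ℂ)/(v:ℂ))^((1:ℂ)/2 - t*Complex.I)
      = Complex.exp (((1:ℂ)/2 - t*Complex.I)
          * ((Real.log ((v:ℝ)+(k:ℝ)) - Real.log (v:ℝ) : ℝ) : ℂ)) := by
    have h1 : (1:ℂ) + (k:ℂ)/(v:ℂ) = ((((v:ℝ)+(k:ℝ))/(v:ℝ) : ℝ) : ℂ) := by
      push_cast; field_simp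
    rw [h1, Complex.cpow_def_of_ne_zero (by
        simp only [ne_eq, Complex.ofReal_eq_zero]; positivity),
      ← Complex.ofReal_log (by positivity), Real.log_div hvk.ne' hv0.ne', mul_comm]
  have hE : 2*(π:ℂ)*Complex.I*((t/(2*π*v)*k : ℝ):ℂ)
      + 2*(π:ℂ)*Complex.I*((-t/(4*π*v^2)*k^2 : ℝ):ℂ)
      = Complex.I*(t:ℂ)*((k:ℂ)/(v:ℂ)) - Complex.I*(t:ℂ)*((k:ℂ)/(v:ℂ))^2/2 := by
    push_cast
    field_simp
    ring
  rw [sqrt_ofReal_eq _ hvk, sqrt_ofReal_eq _ hv0]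
  unfold fRS
  rw [hcp, hE]
  rw [div_eq_iff (Complex.exp_ne_zero _)]
  simp only [← Complex.exp_sub, ← Complex.exp_add, div_eq_mul_inv, ← Complex.exp_neg]
  congr 1
  push_cast
  ring

lemma quadSum_abs_le (K j : ℕ) (hK : 0 < K) (a b : ℝ) :
    ‖quadSum K j a b‖ ≤ (K:ℝ) * ((K:ℝ)-1)^j / (K:ℝ)^j := by
  have hK1 : (0:ℝ) ≤ (K:ℝ) - 1 := by
    have : (1:ℝ) ≤ K := by exact_mod_cast hK
    linarith
  unfold quadSum
  rw [norm_mul]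
  have h1 : ‖1/(K:ℂ)^j‖ = 1/(K:ℝ)^j := by
    rw [norm_div, norm_one, norm_pow, Complex.norm_natCast]
  rw [h1]
  have h2 : ‖∑ k ∈ Finset.range K,
      (k:ℂ)^j * Complex.exp (2*(π:ℂ)*Complex.I*((a*k : ℝ):ℂ)
        + 2*(π:ℂ)*Complex.I*((b*k^2 : ℝ):ℂ))‖ ≤ (K:ℝ) * ((K:ℝ)-1)^j := by
    calc _ ≤ ∑ k ∈ Finset.range K, ‖(k:ℂ)^j
          * Complex.exp (2*(π:ℂ)*Complex.I*((a*k : ℝ):ℂ)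
            + 2*(π:ℂ)*Complex.I*((b*k^2 : ℝ):ℂ))‖ := norm_sum_le _ _
      _ ≤ ∑ k ∈ Finset.range K, ((K:ℝ)-1)^j := by
          apply Finset.sum_le_sum
          intro k hk
          rw [norm_mul, norm_pow, Complex.norm_natCast]
          have hre : 2*(π:ℂ)*Complex.I*((a*k : ℝ):ℂ)
              + 2*(π:ℂ)*Complex.I*((b*k^2 : ℝ):ℂ)
              = ((2*π*(a*k) + 2*π*(b*k^2) : ℝ):ℂ) * Complex.I := by
            push_cast; ring
          rw [hre, Complex.norm_exp_ofReal_mul_I, mul_one]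
          apply pow_le_pow_left₀ (by positivity)
          have : k + 1 ≤ K := Finset.mem_range.mp hk
          have : (k:ℝ) + 1 ≤ (K:ℝ) := by exact_mod_cast this
          linarith
      _ = (K:ℝ) * ((K:ℝ)-1)^j := by rw [Finset.sum_const, Finset.card_range, nsmul_eq_mul]
  calc (1/(K:ℝ)^j) * ‖_‖ ≤ (1/(K:ℝ)^j) * ((K:ℝ) * ((K:ℝ)-1)^j) := by
        apply mul_le_mul_of_nonneg_left h2 (by positivity)
    _ = (K:ℝ) * ((K:ℝ)-1)^j / (K:ℝ)^j := by ring

/-- Let `t > 0`, `v, K` positive integers with `K ≤ v`, `s* = 1/2 − it`,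
`a = t/(2πv)`, `b = −t/(4πv²)`, `c(j) = (K/v)^j f_{s*}^{(j)}(0)/j!`. Then
`Σ_j c(j) F(K, j; a, b)` converges absolutely and
`Σ_{k=0}^{K−1} e^{it log(v+k)}/√(v+k) = (e^{it log v}/√v) Σ_{j=0}^∞ c(j) F(K, j; a, b)`. -/
theorem stmt_10 (t : ℝ) (ht : 0 < t) (v K : ℕ) (hv : 0 < v) (hK : 0 < K) (hKv : K ≤ v) :
    Summable (fun j : ℕ =>
      ‖(((K:ℂ)/(v:ℂ))^j * iteratedDeriv j (fRS (1/2 - t * Complex.I)) 0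
          / (Nat.factorial j : ℂ))
        * quadSum K j (t/(2*π*v)) (-t/(4*π*v^2))‖) ∧
    ∑ k ∈ Finset.range K,
        Complex.exp (Complex.I * (t:ℂ) * (Real.log ((v:ℝ) + (k:ℝ)) : ℂ))
          / ((Real.sqrt ((v:ℝ) + (k:ℝ)) : ℝ) : ℂ)
      = (Complex.exp (Complex.I * (t:ℂ) * (Real.log (v:ℝ) : ℂ)) / ((Real.sqrt (v:ℝ) : ℝ) : ℂ))
        * ∑' j : ℕ,
            (((K:ℂ)/(v:ℂ))^j * iteratedDeriv j (fRS (1/2 - t * Complex.I)) 0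
                / (Nat.factorial j : ℂ))
              * quadSum K j (t/(2*π*v)) (-t/(4*π*v^2)) := by
  have hv0 : (0:ℝ) < (v:ℝ) := by exact_mod_cast hv
  have hvC : (v:ℂ) ≠ 0 := by exact_mod_cast hv.ne'
  have hKC : (K:ℂ) ≠ 0 := by exact_mod_cast hK.ne'
  set s : ℂ := 1/2 - t * Complex.I with hs
  set D : ℕ → ℂ := fun j => iteratedDeriv j (fRS s) 0 with hD
  have hdiff := fRS_diff s
  have hTaylor : ∀ z : ℂ, ‖z‖ < 1 →
      HasSum (fun j : ℕ => ((j.factorial : ℂ))⁻¹ • z ^ j • D j) (fRS s z) := by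
    intro z hz
    have := Complex.hasSum_taylorSeries_on_ball hdiff
      (z := z) (by simpa [Metric.mem_ball] using hz)
    simpa using this
  set ρ : ℝ := ((K:ℝ)-1)/(v:ℝ) with hρ
  have hK1 : (1:ℝ) ≤ (K:ℝ) := by exact_mod_cast hK
  have hKle : (K:ℝ) ≤ (v:ℝ) := by exact_mod_cast hKv
  have hρ0 : 0 ≤ ρ := by apply div_nonneg <;> linarith
  have hρ1 : ρ < 1 := by rw [hρ, div_lt_one hv0]; linarith
  set ρ' : ℝ := (ρ+1)/2 with hρ'
  have hρ'0 : 0 < ρ' := by rw [hρ']; linarith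
  have hρρ' : ρ < ρ' := by rw [hρ']; linarith
  have hρ'1 : ρ' < 1 := by rw [hρ']; linarith
  have hρeq : ρ = ((K:ℝ)-1)/(v:ℝ) := hρ
  clear_value ρ'
  -- bound on Taylor coefficients
  have H' := hTaylor ((ρ' : ℝ) : ℂ)
    (by rw [Complex.norm_real, Real.norm_eq_abs, abs_of_pos hρ'0]; exact hρ'1)
  obtain ⟨M, hM⟩ := (H'.summable.tendsto_atTop_zero.norm).bddAbove_range
  have hMj : ∀ j : ℕ, (j.factorial : ℝ)⁻¹ * ρ'^j * ‖D j‖ ≤ M := by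
    intro j
    have h1 : ‖((j.factorial : ℂ))⁻¹ • ((ρ' : ℝ) : ℂ) ^ j • D j‖ ≤ M :=
      hM ⟨j, by simp⟩
    rwa [norm_smul, norm_smul, norm_inv, norm_pow, Complex.norm_natCast,
      Complex.norm_real, Real.norm_eq_abs, abs_of_pos hρ'0, ← mul_assoc] at h1
  have hM0 : 0 ≤ M := le_trans (by positivity) (hMj 0)
  -- the bound on the terms
  have key : ∀ j : ℕ,
      ‖(((K:ℂ)/(v:ℂ))^j * D j / (Nat.factorial j : ℂ))
        * quadSum K j (t/(2*π*v)) (-t/(4*π*v^2))‖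
      ≤ ((K:ℝ) * M) * (ρ/ρ')^j := by
    intro j
    rw [norm_mul]
    have hA : ‖((K:ℂ)/(v:ℂ))^j * D j / (Nat.factorial j : ℂ)‖
        = ((K:ℝ)/(v:ℝ))^j * ‖D j‖ / (j.factorial : ℝ) := by
      rw [norm_div, norm_mul, norm_pow, norm_div, Complex.norm_natCast,
        Complex.norm_natCast, Complex.norm_natCast]
    rw [hA]
    calc ((K:ℝ)/(v:ℝ))^j * ‖D j‖ / (j.factorial : ℝ)
          * ‖quadSum K j (t/(2*π*v)) (-t/(4*π*v^2))‖
        ≤ ((K:ℝ)/(v:ℝ))^j * ‖D j‖ / (j.factorial : ℝ)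
          * ((K:ℝ) * ((K:ℝ)-1)^j / (K:ℝ)^j) := by
          apply mul_le_mul_of_nonneg_left (quadSum_abs_le K j hK _ _) (by positivity)
      _ = (K:ℝ) * ((j.factorial : ℝ)⁻¹ * ρ'^j * ‖D j‖) * (ρ/ρ')^j := by
          have h2 : (ρ/ρ')^j = ((K:ℝ)-1)^j/(v:ℝ)^j / ρ'^j := by
            rw [hρeq, div_pow, div_pow]
          rw [h2, div_pow]
          have hKj : ((K:ℝ))^j ≠ 0 := by positivity
          have hvj : ((v:ℝ))^j ≠ 0 := by positivity
          have hρ'j : (ρ')^j ≠ 0 := by positivity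
          have hfj : ((j.factorial:ℕ):ℝ) ≠ 0 := by
            exact_mod_cast j.factorial_ne_zero
          field_simp
      _ ≤ (K:ℝ) * M * (ρ/ρ')^j := by
          have h2 : (K:ℝ) * ((j.factorial : ℝ)⁻¹ * ρ'^j * ‖D j‖) ≤ (K:ℝ) * M :=
            mul_le_mul_of_nonneg_left (hMj j) (by positivity)
          apply mul_le_mul_of_nonneg_right h2 (by positivity)
  have hsummable : Summable (fun j : ℕ =>
      ‖(((K:ℂ)/(v:ℂ))^j * D j / (Nat.factorial j : ℂ))
        * quadSum K j (t/(2*π*v)) (-t/(4*π*v^2))‖) := by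
    apply Summable.of_nonneg_of_le (fun j => norm_nonneg _) key
    exact (summable_geometric_of_lt_one (by positivity)
      ((div_lt_one hρ'0).mpr hρρ')).mul_left _
  refine ⟨hsummable, ?_⟩
  -- the equality
  set Cst : ℂ := Complex.exp (Complex.I * (t:ℂ) * (Real.log (v:ℝ) : ℂ))
      / ((Real.sqrt (v:ℝ) : ℝ) : ℂ) with hCst
  set E : ℕ → ℂ := fun k => Complex.exp (2*(π:ℂ)*Complex.I*((t/(2*π*v)*k : ℝ):ℂ)
      + 2*(π:ℂ)*Complex.I*((-t/(4*π*v^2)*k^2 : ℝ):ℂ)) with hE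
  have hHS : ∀ k ∈ Finset.range K, HasSum
      (fun j : ℕ => (Cst * E k) * (((j.factorial : ℂ))⁻¹ * ((k:ℂ)/(v:ℂ))^j * D j))
      (Complex.exp (Complex.I * (t:ℂ) * (Real.log ((v:ℝ) + (k:ℝ)) : ℂ))
          / ((Real.sqrt ((v:ℝ) + (k:ℝ)) : ℝ) : ℂ)) := by
    intro k hk
    have hkv : k < v := lt_of_lt_of_le (Finset.mem_range.mp hk) hKv
    have hnz : ‖(k:ℂ)/(v:ℂ)‖ < 1 := by
      rw [norm_div, Complex.norm_natCast, Complex.norm_natCast, div_lt_one hv0]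
      exact_mod_cast hkv
    have H := (hTaylor _ hnz).mul_left (Cst * E k)
    have hval : (Cst * E k) * fRS s ((k:ℂ)/(v:ℂ))
        = Complex.exp (Complex.I * (t:ℂ) * (Real.log ((v:ℝ) + (k:ℝ)) : ℂ))
          / ((Real.sqrt ((v:ℝ) + (k:ℝ)) : ℝ) : ℂ) := by
      rw [point_id t v k hv hkv]; ring
    rw [hval] at H
    convert H using 2 with j
    · rfl
    simp only [smul_eq_mul]; ring
  have total := hasSum_sum hHS
  have hfun : ∀ j : ℕ, (∑ k ∈ Finset.range K,
      (Cst * E k) * (((j.factorial : ℂ))⁻¹ * ((k:ℂ)/(v:ℂ))^j * D j))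
      = Cst * ((((K:ℂ)/(v:ℂ))^j * D j / (Nat.factorial j : ℂ))
        * quadSum K j (t/(2*π*v)) (-t/(4*π*v^2))) := by
    intro j
    rw [quadSum]
    simp only [Finset.mul_sum]
    apply Finset.sum_congr rfl
    intro k _
    have hfj : ((j.factorial : ℕ) : ℂ) ≠ 0 := by
      exact_mod_cast (Nat.factorial_ne_zero j)
    rw [hE]
    field_simp
    ring
  rw [funext hfun] at total
  rw [← tsum_mul_left]
  exact total.tsum_eq.symm
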